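/- Suppose the distance between tiles t₁, t₂ with δ₀(t₁) = δ₀(t₂) = n is computed as follows: if for some d ≤ n the leftmost/rightmost ancestors of t₁ and of t₂ in ring R_{n-d} coincide we output 2d, and if they are merely adjacent we output 2d+1. If the algorithm outputs a value at the first (smallest) such d, then this value is a correct upper bound on the graph distance δ(t₁,t₂): there exists a path of that length consisting of d parent edges from t₁, at most one sibling edge, and d child edges to t₂. -/
import Mathlib

lemma stmt_16_aux {V : Type*} (G : SimpleGraph V) (ring : V → ℕ) (f : V → V)
    (hf : ∀ v : V, 1 ≤ ring v → G.Adj v (f v) ∧ ring (f v) = ring v - 1) :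
    ∀ (d : ℕ) (v : V), d ≤ ring v →
      ring (f^[d] v) = ring v - d ∧ ∃ w : G.Walk v (f^[d] v), w.length = d := by
  intro d
  induction d with
  | zero => intro v _; exact ⟨by simp, ⟨SimpleGraph.Walk.nil, rfl⟩⟩
  | succ d ih =>
    intro v hv
    obtain ⟨hr, w, hw⟩ := ih v (by omega)
    have h1 : 1 ≤ ring (f^[d] v) := by omega
    obtain ⟨hadj, hr'⟩ := hf _ h1
    rw [Function.iterate_succ_apply']
    refine ⟨by omega, ⟨w.concat hadj, ?_⟩⟩
    rw [SimpleGraph.Walk.length_concat, hw]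

/-- Correctness of the distance algorithm's upper bound for tiles on the same ring.
In the tessellation graph, each non-central tile `v` has a left parent `pL v` and a
right parent `pR v` on the previous ring, both adjacent to `v`.  Let `t₁, t₂` be tiles
with `δ₀(t₁) = δ₀(t₂) = n` and let `d ≤ n`.  If an ancestor of `t₁` at ring `n - d`
(obtained by iterating `pL` or `pR`) coincides with such an ancestor of `t₂`, then
there is a walk from `t₁` to `t₂` of length `2d` (`d` parent edges and `d` child
edges); if the two ancestors are merely adjacent (one sibling edge in between), then
there is a walk of length `2d + 1`.  In particular these outputs are correct upper
bounds on the graph distance `δ(t₁,t₂)`. -/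
theorem stmt_16 {V : Type*} (G : SimpleGraph V) (ring : V → ℕ) (pL pR : V → V)
    (hL : ∀ v : V, 1 ≤ ring v → G.Adj v (pL v) ∧ ring (pL v) = ring v - 1)
    (hR : ∀ v : V, 1 ≤ ring v → G.Adj v (pR v) ∧ ring (pR v) = ring v - 1)
    (t₁ t₂ : V) (n d : ℕ) (h₁ : ring t₁ = n) (h₂ : ring t₂ = n) (hd : d ≤ n) :
    (∀ a b : V, (a = pL^[d] t₁ ∨ a = pR^[d] t₁) → (b = pL^[d] t₂ ∨ b = pR^[d] t₂) →
        a = b → (∃ w : G.Walk t₁ t₂, w.length = 2 * d) ∧ G.dist t₁ t₂ ≤ 2 * d) ∧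
      (∀ a b : V, (a = pL^[d] t₁ ∨ a = pR^[d] t₁) → (b = pL^[d] t₂ ∨ b = pR^[d] t₂) →
        G.Adj a b → (∃ w : G.Walk t₁ t₂, w.length = 2 * d + 1) ∧
          G.dist t₁ t₂ ≤ 2 * d + 1) := by
  have w1 : ∀ a : V, (a = pL^[d] t₁ ∨ a = pR^[d] t₁) →
      ∃ w : G.Walk t₁ a, w.length = d := by
    rintro a (rfl | rfl)
    · exact (stmt_16_aux G ring pL hL d t₁ (by omega)).2
    · exact (stmt_16_aux G ring pR hR d t₁ (by omega)).2
  have w2 : ∀ b : V, (b = pL^[d] t₂ ∨ b = pR^[d] t₂) →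
      ∃ w : G.Walk t₂ b, w.length = d := by
    rintro b (rfl | rfl)
    · exact (stmt_16_aux G ring pL hL d t₂ (by omega)).2
    · exact (stmt_16_aux G ring pR hR d t₂ (by omega)).2
  constructor
  · intro a b ha hb hab
    subst hab
    obtain ⟨wa, hwa⟩ := w1 a ha
    obtain ⟨wb, hwb⟩ := w2 a hb
    have hw : ∃ w : G.Walk t₁ t₂, w.length = 2 * d := by
      refine ⟨wa.append wb.reverse, ?_⟩
      rw [SimpleGraph.Walk.length_append, SimpleGraph.Walk.length_reverse, hwa, hwb]
      omega
    obtain ⟨w, hw'⟩ := hw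
    exact ⟨⟨w, hw'⟩, hw' ▸ SimpleGraph.dist_le w⟩
  · intro a b ha hb hab
    obtain ⟨wa, hwa⟩ := w1 a ha
    obtain ⟨wb, hwb⟩ := w2 b hb
    have hw : ∃ w : G.Walk t₁ t₂, w.length = 2 * d + 1 := by
      refine ⟨wa.append (SimpleGraph.Walk.cons hab wb.reverse), ?_⟩
      rw [SimpleGraph.Walk.length_append, SimpleGraph.Walk.length_cons,
        SimpleGraph.Walk.length_reverse, hwa, hwb]
      omega
    obtain ⟨w, hw'⟩ := hw
    exact ⟨⟨w, hw'⟩, hw' ▸ SimpleGraph.dist_le w⟩
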